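/- Every finite connected undirected graph on n vertices admits a bijective labeling I : V → {0,...,n-1} such that for every v ∈ {0,...,n-2}, enc(N_I(v) \ {v+1}) ≥ enc(N_I(v+1) \ {v}), where N_I(v) is the set of labels of neighbors of the vertex labeled v and enc(X) = Σ_{u∈X} 2^(n-u-1). -/

import Mathlib

open scoped Classical

/-- Encoding of a finite set of naturals below `n`: `enc X = Σ_{x∈X} 2^(n-x-1)`. -/
def enc (n : ℕ) (S : Finset ℕ) : ℕ := ∑ x ∈ S, 2 ^ (n - x - 1)

/-- Every finite connected graph admits a bijective labeling `I : V ≃ Fin n` satisfying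
the symmetry-breaking constraints `enc(N_I(k)\{k+1}) ≥ enc(N_I(k+1)\{k})` for all `k`. -/
theorem stmt4 {V : Type*} [Fintype V] (n : ℕ) (hn : Fintype.card V = n)
    (G : SimpleGraph V) (hconn : G.Connected) :
    ∃ I : V ≃ Fin n, ∀ k : ℕ, ∀ hk : k + 1 < n,
      enc n (((G.neighborFinset (I.symm ⟨k, Nat.lt_of_succ_lt hk⟩)).image
          (fun u => (I u : ℕ))).erase (k + 1)) ≥
      enc n (((G.neighborFinset (I.symm ⟨k + 1, hk⟩)).image
          (fun u => (I u : ℕ))).erase k) := by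
  classical
  -- the weight of a labeling: sum over ordered adjacent pairs of products of powers of two
  set F : (V ≃ Fin n) → V → ℤ := fun I v => (2:ℤ) ^ (n - (I v : ℕ) - 1) with hFdef
  set W : (V ≃ Fin n) → ℤ :=
    fun I => ∑ v, ∑ u ∈ G.neighborFinset v, F I v * F I u with hWdef
  have hne : Nonempty (V ≃ Fin n) := ⟨Fintype.equivFinOfCardEq hn⟩
  obtain ⟨I, hmax⟩ := Finite.exists_max W
  refine ⟨I, ?_⟩
  intro k hk
  by_contra hcon
  push_neg at hcon
  set x : V := I.symm ⟨k, Nat.lt_of_succ_lt hk⟩ with hxdef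
  set y : V := I.symm ⟨k + 1, hk⟩ with hydef
  have hxy : x ≠ y := by
    intro h
    have := I.symm.injective h
    simp [Fin.mk.injEq] at this
  have hIx : (I x : ℕ) = k := by simp [hxdef]
  have hIy : (I y : ℕ) = k + 1 := by simp [hydef]
  set b : ℤ := 2 ^ (n - k - 2) with hbdef
  have hb0 : (0:ℤ) < b := by positivity
  have hFx : F I x = 2 * b := by
    have h1 : n - (I x : ℕ) - 1 = (n - k - 2) + 1 := by rw [hIx]; omega
    simp only [hFdef, h1, pow_succ, hbdef]; ring
  have hFy : F I y = b := by
    have h1 : n - (I y : ℕ) - 1 = n - k - 2 := by rw [hIy]; omega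
    simp only [hFdef, h1, hbdef]
  -- the swapped labeling
  set I' : V ≃ Fin n := (Equiv.swap x y).trans I with hI'def
  set δ : V → ℤ := fun v => if v = x then -b else if v = y then b else 0 with hδdef
  have hF' : ∀ v, F I' v = F I v + δ v := by
    intro v
    by_cases h1 : v = x
    · subst h1
      have h2 : F I' x = F I y := by
        simp only [hFdef]
        rw [show I' x = I y from by simp [hI'def, Equiv.swap_apply_left]]
      rw [h2, hFy, hFx, show δ x = -b from by simp [hδdef]]
      ring
    · by_cases h2 : v = y
      · subst h2
        have h3 : F I' y = F I x := by
          simp only [hFdef]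
          rw [show I' y = I x from by simp [hI'def, Equiv.swap_apply_right]]
        rw [h3, hFy, hFx, show δ y = b from by simp [hδdef, hxy.symm]]
        ring
      · have h3 : F I' v = F I v := by
          simp only [hFdef]
          rw [show I' v = I v from by simp [hI'def, Equiv.swap_apply_of_ne_of_ne h1 h2]]
        rw [h3, show δ v = 0 from by simp [hδdef, h1, h2], add_zero]
  -- expansion of W I'
  have E1 : W I' = W I + (∑ v, ∑ u ∈ G.neighborFinset v, F I v * δ u)
      + (∑ v, ∑ u ∈ G.neighborFinset v, δ v * F I u)
      + (∑ v, ∑ u ∈ G.neighborFinset v, δ v * δ u) := by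
    have : W I' = ∑ v, ∑ u ∈ G.neighborFinset v,
        (F I v * F I u + F I v * δ u + δ v * F I u + δ v * δ u) := by
      rw [hWdef]
      refine Finset.sum_congr rfl fun v _ => Finset.sum_congr rfl fun u _ => ?_
      rw [hF' v, hF' u]; ring
    rw [this]
    simp only [Finset.sum_add_distrib]
    rfl
  -- symmetry of the bilinear form
  have key : ∀ t : V → V → ℤ,
      (∑ v, ∑ u ∈ G.neighborFinset v, t v u) = ∑ v, ∑ u ∈ G.neighborFinset v, t u v := by
    intro t
    have ind1 : ∀ v : V,
        (∑ u ∈ G.neighborFinset v, t v u) = ∑ u, if G.Adj v u then t v u else 0 := by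
      intro v
      have hv : G.neighborFinset v = Finset.univ.filter (fun u => G.Adj v u) := by
        ext u; simp [SimpleGraph.mem_neighborFinset]
      rw [hv, Finset.sum_filter]
    have ind2 : ∀ u : V,
        (∑ v, if G.Adj v u then t v u else 0) = ∑ v ∈ G.neighborFinset u, t v u := by
      intro u
      have hv : G.neighborFinset u = Finset.univ.filter (fun v => G.Adj v u) := by
        ext v; simp [SimpleGraph.mem_neighborFinset, G.adj_comm]
      rw [hv, Finset.sum_filter]
    calc (∑ v, ∑ u ∈ G.neighborFinset v, t v u)
        = ∑ v, ∑ u, if G.Adj v u then t v u else 0 :=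
          Finset.sum_congr rfl fun v _ => ind1 v
      _ = ∑ u, ∑ v, if G.Adj v u then t v u else 0 := Finset.sum_comm
      _ = ∑ u, ∑ v ∈ G.neighborFinset u, t v u :=
          Finset.sum_congr rfl fun u _ => ind2 u
  have E2 : (∑ v, ∑ u ∈ G.neighborFinset v, F I v * δ u)
      = ∑ v, ∑ u ∈ G.neighborFinset v, δ v * F I u := by
    rw [key (fun v u => F I v * δ u)]
    exact Finset.sum_congr rfl fun v _ => Finset.sum_congr rfl fun u _ => mul_comm _ _
  -- sums of δ-weighted functions collapse to two terms
  have hδsum : ∀ g : V → ℤ, (∑ v, δ v * g v) = b * g y - b * g x := by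
    intro g
    rw [← Finset.sum_subset (Finset.subset_univ ({x, y} : Finset V))
      (fun v _ hv => by
        simp only [Finset.mem_insert, Finset.mem_singleton, not_or] at hv
        simp [hδdef, hv.1, hv.2])]
    rw [Finset.sum_pair hxy]
    simp [hδdef, hxy.symm]; ring
  have hδs : ∀ s : Finset V, (∑ u ∈ s, δ u)
      = (if x ∈ s then -b else 0) + (if y ∈ s then b else 0) := by
    intro s
    have : (∑ u ∈ s, δ u)
        = ∑ u ∈ s, ((if u = x then -b else 0) + (if u = y then b else 0)) := by
      refine Finset.sum_congr rfl fun u _ => ?_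
      by_cases h1 : u = x
      · subst h1; simp [hδdef, hxy]
      · by_cases h2 : u = y <;> simp [hδdef, h1, h2, hxy.symm]
    rw [this, Finset.sum_add_distrib, Finset.sum_ite_eq' s x fun _ => -b,
      Finset.sum_ite_eq' s y fun _ => b]
  set Ax : ℤ := ∑ u ∈ G.neighborFinset x, F I u with hAxdef
  set Ay : ℤ := ∑ u ∈ G.neighborFinset y, F I u with hAydef
  have E3 : (∑ v, ∑ u ∈ G.neighborFinset v, δ v * F I u) = b * Ay - b * Ax := by
    have : (∑ v, ∑ u ∈ G.neighborFinset v, δ v * F I u)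
        = ∑ v, δ v * ∑ u ∈ G.neighborFinset v, F I u := by
      exact Finset.sum_congr rfl fun v _ => (Finset.mul_sum _ _ _).symm
    rw [this, hδsum]
  have E4 : (∑ v, ∑ u ∈ G.neighborFinset v, δ v * δ u)
      = b * (∑ u ∈ G.neighborFinset y, δ u) - b * (∑ u ∈ G.neighborFinset x, δ u) := by
    have : (∑ v, ∑ u ∈ G.neighborFinset v, δ v * δ u)
        = ∑ v, δ v * ∑ u ∈ G.neighborFinset v, δ u := by
      exact Finset.sum_congr rfl fun v _ => (Finset.mul_sum _ _ _).symm
    rw [this, hδsum]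
  have hxny : x ∉ G.neighborFinset x := by simp
  have hyny : y ∉ G.neighborFinset y := by simp
  have hmemyx : y ∈ G.neighborFinset x ↔ G.Adj x y := by simp
  have hmemxy : x ∈ G.neighborFinset y ↔ G.Adj x y := by
    simp [SimpleGraph.mem_neighborFinset, G.adj_comm]
  have E5 : (∑ u ∈ G.neighborFinset y, δ u) = if G.Adj x y then -b else 0 := by
    rw [hδs]
    by_cases h : G.Adj x y
    · rw [if_pos (hmemxy.mpr h), if_neg hyny, if_pos h]; ring
    · rw [if_neg (fun hm => h (hmemxy.mp hm)), if_neg hyny, if_neg h]; ring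
  have E6 : (∑ u ∈ G.neighborFinset x, δ u) = if G.Adj x y then b else 0 := by
    rw [hδs]
    by_cases h : G.Adj x y
    · rw [if_pos (hmemyx.mpr h), if_neg hxny, if_pos h]; ring
    · rw [if_neg hxny, if_neg (fun hm => h (hmemyx.mp hm)), if_neg h]; ring
  -- identify Ax, Ay with the encodings
  have hginj : Function.Injective (fun u : V => (I u : ℕ)) :=
    fun u v h => I.injective (Fin.val_injective h)
  set S : Finset ℕ := ((G.neighborFinset x).image (fun u => (I u : ℕ))).erase (k + 1)
    with hSdef
  set T : Finset ℕ := ((G.neighborFinset y).image (fun u => (I u : ℕ))).erase k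
    with hTdef
  have hSenc : (enc n S : ℤ) = ∑ u ∈ (G.neighborFinset x).erase y, F I u := by
    have h1 : S = ((G.neighborFinset x).erase y).image (fun u => (I u : ℕ)) := by
      rw [hSdef, Finset.image_erase hginj, hIy]
    rw [h1, enc, Finset.sum_image (fun u _ v _ h => hginj h)]
    push_cast
    rfl
  have hTenc : (enc n T : ℤ) = ∑ u ∈ (G.neighborFinset y).erase x, F I u := by
    have h1 : T = ((G.neighborFinset y).erase x).image (fun u => (I u : ℕ)) := by
      rw [hTdef, Finset.image_erase hginj, hIx]
    rw [h1, enc, Finset.sum_image (fun u _ v _ h => hginj h)]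
    push_cast
    rfl
  have E7 : Ax = (enc n S : ℤ) + (if G.Adj x y then b else 0) := by
    rw [hSenc]
    by_cases h : G.Adj x y
    · rw [if_pos h, hAxdef, ← Finset.sum_erase_add _ _ (hmemyx.mpr h), hFy]
    · rw [if_neg h, add_zero, hAxdef,
        Finset.erase_eq_of_notMem (fun hm => h (hmemyx.mp hm))]
  have E8 : Ay = (enc n T : ℤ) + (if G.Adj x y then 2 * b else 0) := by
    rw [hTenc]
    by_cases h : G.Adj x y
    · rw [if_pos h, hAydef, ← Finset.sum_erase_add _ _ (hmemxy.mpr h), hFx]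
    · rw [if_neg h, add_zero, hAydef,
        Finset.erase_eq_of_notMem (fun hm => h (hmemxy.mp hm))]
  -- put everything together
  have hfinal : W I' = W I + 2 * b * ((enc n T : ℤ) - (enc n S : ℤ)) := by
    rw [E1, E2, E3, E4, E5, E6, E7, E8]
    by_cases h : G.Adj x y <;> simp only [if_pos, if_neg, h, if_true, if_false] <;> ring
  have hlt : W I < W I' := by
    rw [hfinal]
    have : (enc n S : ℤ) < (enc n T : ℤ) := by exact_mod_cast hcon
    nlinarith
  exact absurd (hmax I') (not_le.mpr hlt)
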